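/- Let C = [a, b] with a < b real, and let f : C → [−∞, ∞] be convex. Then f is infimum-stable (for every sequence of convex functions fₙ : C → [−∞,∞] converging pointwise to f one has inf_C fₙ → inf_C f) if and only if either dom f has more than one point or inf_C f = −∞. -/

import Mathlib

set_option maxHeartbeats 1000000

open Filter Set

-- paste helpers (assume compiled separately; for test, copy inline)
lemma epi_comb {I : Set ℝ} {g : ℝ → EReal}
    (hg : Convex ℝ {p : ℝ × ℝ | p.1 ∈ I ∧ g p.1 ≤ (p.2 : EReal)})
    {x z rx rz : ℝ} (hx : x ∈ I) (hz : z ∈ I)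
    (hgx : g x ≤ (rx : EReal)) (hgz : g z ≤ (rz : EReal))
    {θ : ℝ} (h0 : 0 ≤ θ) (h1 : θ ≤ 1) :
    (θ*x + (1-θ)*z ∈ I) ∧ g (θ*x + (1-θ)*z) ≤ ((θ*rx + (1-θ)*rz : ℝ) : EReal) := by
  have h2 := hg (show ((x, rx) : ℝ × ℝ) ∈ _ from ⟨hx, hgx⟩)
    (show ((z, rz) : ℝ × ℝ) ∈ _ from ⟨hz, hgz⟩) (a := θ) (b := 1-θ) h0 (by linarith) (by ring)
  refine ⟨?_, ?_⟩
  · simpa [Prod.smul_mk, smul_eq_mul] using h2.1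
  · push_cast
    simpa [Prod.smul_mk, smul_eq_mul] using h2.2

lemma lower_bound_main (a b : ℝ) (hab : a < b) (f : ℝ → EReal) (F : ℕ → ℝ → EReal)
    (hFconv : ∀ n, Convex ℝ {p : ℝ × ℝ | p.1 ∈ Set.Icc a b ∧ F n p.1 ≤ (p.2 : EReal)})
    (hptw : ∀ x ∈ Set.Icc a b, Tendsto (fun n => F n x) atTop (nhds (f x)))
    (hnt : {x ∈ Set.Icc a b | f x ≠ ⊤}.Nontrivial)
    (hm : (⨅ x ∈ Set.Icc a b, f x) ≠ ⊥) :
    (⨅ x ∈ Set.Icc a b, f x) ≤ liminf (fun n => ⨅ x ∈ Set.Icc a b, F n x) atTop := by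
  set I := Set.Icc a b with hI
  clear_value I
  set m := ⨅ x ∈ I, f x with hmdef
  clear_value m
  by_contra hcon
  push_neg at hcon
  -- m ≤ f x for x ∈ I
  have hmle : ∀ x ∈ I, m ≤ f x := by
    intro x hx; rw [hmdef]; exact iInf₂_le x hx
  have hfnbot : ∀ x ∈ I, f x ≠ ⊥ := by
    intro x hx hbx
    exact hm (le_bot_iff.mp (hbx ▸ hmle x hx))
  -- real r between liminf and m
  obtain ⟨r, hr1, hr2⟩ := EReal.exists_between_coe_real hcon
  -- frequently the inf dips below r
  have hfreq : ∃ᶠ n in atTop, (⨅ x ∈ I, F n x) < (r : EReal) :=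
    Filter.frequently_lt_of_liminf_lt (by isBoundedDefault) hr1
  obtain ⟨φ, hφ, hφP⟩ := Filter.extraction_of_frequently_atTop hfreq
  -- dip points
  have hdip : ∀ k, ∃ y, ∃ _ : y ∈ I, F (φ k) y < (r : EReal) := by
    intro k
    have := hφP k
    rw [iInf_lt_iff] at this
    obtain ⟨y, hy⟩ := this
    rw [iInf_lt_iff] at hy
    obtain ⟨hyI, hlt⟩ := hy
    exact ⟨y, hyI, hlt⟩
  choose y hyI hylt using hdip
  have hyI' : ∀ k, y k ∈ Set.Icc a b := fun k => hI ▸ hyI k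
  obtain ⟨ystar, hystarI, ψ, hψ, hyconv⟩ :=
    (isCompact_Icc (a := a) (b := b)).tendsto_subseq hyI'
  set n : ℕ → ℕ := fun k => φ (ψ k) with hn
  have hnmono : StrictMono n := hφ.comp hψ
  set z : ℕ → ℝ := fun k => y (ψ k) with hz
  have hystarI' : ystar ∈ I := by rw [hI]; exact hystarI
  have hzI : ∀ k, z k ∈ I := fun k => hyI (ψ k)
  have hzlt : ∀ k, F (n k) (z k) < (r : EReal) := fun k => hylt (ψ k)
  have hzconv : Tendsto z atTop (nhds ystar) := hyconv
  clear_value n z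
  -- subsequence pointwise convergence
  have hsub : ∀ x ∈ I, Tendsto (fun k => F (n k) x) atTop (nhds (f x)) := by
    intro x hx
    exact (hptw x hx).comp hnmono.tendsto_atTop
  -- pick p ∈ dom f, p ≠ ystar
  obtain ⟨u, ⟨huI, huT⟩, v, ⟨hvI, hvT⟩, huv⟩ := hnt
  set p : ℝ := if ystar = u then v else u with hp
  have hpI : p ∈ I := by rw [hp]; split <;> assumption
  have hpT : f p ≠ ⊤ := by rw [hp]; split <;> assumption
  have hpne : p ≠ ystar := by
    rw [hp]; split
    · rename_i h; rw [h]; exact fun hh => huv hh.symm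
    · rename_i h; exact fun hh => h hh.symm
  set α : ℝ := (f p).toReal with hα
  have hfp : f p = (α : EReal) := (EReal.coe_toReal hpT (hfnbot p hpI)).symm
  clear_value α
  clear_value p
  -- line parametrization
  set L : ℝ → ℝ := fun t => p + t * (ystar - p) with hL
  have hL0 : L 0 = p := by simp [hL]
  have hL1 : L 1 = ystar := by simp [hL]
  have hyp : ystar - p ≠ 0 := sub_ne_zero.mpr (Ne.symm hpne)
  set τ : ℕ → ℝ := fun k => (z k - p) / (ystar - p) with hτdef
  have hLτ : ∀ k, L (τ k) = z k := by
    intro k; rw [hL, hτdef]; field_simp; ring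
  have hLcomb : ∀ θ t1 t2 : ℝ, θ * L t1 + (1-θ) * L t2 = L (θ*t1+(1-θ)*t2) := by
    intro θ t1 t2; simp only [hL]; ring
  have hτconv : Tendsto τ atTop (nhds 1) := by
    have h1 : Tendsto (fun k => (z k - p) / (ystar - p)) atTop
        (nhds ((ystar - p) / (ystar - p))) := (hzconv.sub_const p).div_const _
    rwa [div_self hyp] at h1
  clear_value L τ
  -- eventually F (n k) p < α + 1
  have hEp : ∀ᶠ k in atTop, F (n k) p < ((α + 1 : ℝ) : EReal) := by
    refine (hsub p hpI).eventually_lt_const ?_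
    rw [hfp]; exact_mod_cast (by linarith : α < α + 1)
  set B : ℝ := max r (α + 1) with hB
  have hrB' : r ≤ B := le_max_left _ _
  have hαB : α + 1 ≤ B := le_max_right _ _
  clear_value B
  -- Step 1: on the open segment, f ∘ L is bounded by B
  have hstep1 : ∀ t ∈ Set.Ioo (0:ℝ) 1, L t ∈ I ∧ f (L t) ≤ (B : EReal) := by
    intro t ht
    have hev : ∀ᶠ k in atTop, L t ∈ I ∧ F (n k) (L t) ≤ (B : EReal) := by
      filter_upwards [hτconv.eventually_const_lt ht.2, hEp] with k hk1 hk2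
      have hτpos : 0 < τ k := lt_trans ht.1 hk1
      set θ : ℝ := t / τ k with hθ
      clear_value θ
      have hθ0 : 0 ≤ θ := by rw [hθ]; exact div_nonneg ht.1.le hτpos.le
      have hθ1 : θ ≤ 1 := by
        rw [hθ, div_le_one hτpos]; exact hk1.le
      have hcomb := epi_comb (hFconv (n k)) (hzI k) hpI (hzlt k).le hk2.le hθ0 hθ1
      have hpt : θ * z k + (1-θ) * p = L t := by
        rw [← hLτ k, ← hL0, hLcomb]
        congr 1
        have h7 : τ k ≠ 0 := ne_of_gt hτpos
        rw [hθ]; field_simp; ring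
      rw [hpt] at hcomb
      refine ⟨hcomb.1, le_trans hcomb.2 ?_⟩
      have : θ * r + (1-θ) * (α+1) ≤ B := by nlinarith
      exact_mod_cast this
    obtain ⟨k0, hk0⟩ := hev.exists
    refine ⟨hk0.1, ?_⟩
    have := hsub (L t) hk0.1
    refine le_of_tendsto this ?_
    filter_upwards [hev] with k hk using hk.2
  -- the midpoint q0
  obtain ⟨hq0I, hq0le⟩ := hstep1 (1/2) (by norm_num)
  set q0 : ℝ := L (1/2) with hq0
  have hq0ge : m ≤ f q0 := hmle q0 hq0I
  -- real μ with r < μ ≤ m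
  obtain ⟨μ, hμ1, hμ2⟩ : ∃ μ : ℝ, r < μ ∧ (μ : EReal) ≤ m := by
    by_cases hmt : m = ⊤
    · exact ⟨r + 1, by linarith, by rw [hmt]; exact le_top⟩
    · have hmr : m = ((m.toReal : ℝ) : EReal) := (EReal.coe_toReal hmt hm).symm
      refine ⟨m.toReal, ?_, hmr.ge⟩
      have h3 : (r : EReal) < ((m.toReal : ℝ) : EReal) := hmr ▸ hr2
      exact_mod_cast h3
  set D : ℝ := B + 1 with hD
  have hrB : r ≤ B := hrB'
  -- eventually F (n k) q0 < D
  have hEq0 : ∀ᶠ k in atTop, F (n k) q0 < (D : EReal) := by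
    refine (hsub q0 hq0I).eventually_lt_const (lt_of_le_of_lt hq0le ?_)
    exact_mod_cast (by linarith : B < D)
  -- choose η
  set η : ℝ := min ((μ - r)/(24*(B+2-r))) (1/3) with hη
  clear_value η
  have hBr : (0:ℝ) < B + 2 - r := by linarith
  have hηpos : 0 < η := by
    rw [hη]; apply lt_min
    · apply div_pos (by linarith) (by linarith)
    · norm_num
  have hη3 : η ≤ 1/3 := by rw [hη]; exact min_le_right _ _
  have hη24 : η ≤ (μ - r)/(24*(B+2-r)) := by rw [hη]; exact min_le_left _ _
  set t : ℝ := 1 - η with htdef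
  clear_value t
  have ht12 : 1/2 < t := by rw [htdef]; linarith
  have htIoo : t ∈ Set.Ioo (0:ℝ) 1 := ⟨by rw [htdef]; linarith, by rw [htdef]; linarith⟩
  obtain ⟨hLtI, _⟩ := hstep1 t htIoo
  have hftge : (μ : EReal) ≤ f (L t) := le_trans hμ2 (hmle _ hLtI)
  -- final eventual bound
  have hfinal : ∀ᶠ k in atTop, F (n k) (L t) ≤ ((r + (μ - r)/2 : ℝ) : EReal) := by
    have h1 : ∀ᶠ k in atTop, τ k < 1 + η/2 :=
      hτconv.eventually_lt_const (by linarith)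
    have h2 : ∀ᶠ k in atTop, t < τ k :=
      hτconv.eventually_const_lt (by rw [htdef]; linarith)
    filter_upwards [h1, h2, hEq0] with k hk1 hk2 hk3
    have hτhalf : 1/2 < τ k := lt_trans ht12 hk2
    set θ : ℝ := (t - 1/2)/(τ k - 1/2) with hθ
    clear_value θ
    have hden : 0 < τ k - 1/2 := by linarith
    have hθ0 : 0 ≤ θ := by rw [hθ]; exact div_nonneg (by linarith) hden.le
    have hθ1 : θ ≤ 1 := by
      rw [hθ, div_le_one hden]; linarith
    have hcomb := epi_comb (hFconv (n k)) (hzI k) hq0I (hzlt k).le hk3.le hθ0 hθ1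
    have hmul : θ * (τ k - 1/2) = t - 1/2 := by
      rw [hθ]; exact div_mul_cancel₀ _ (ne_of_gt hden)
    have hpt : θ * z k + (1-θ) * q0 = L t := by
      rw [← hLτ k, hq0, hLcomb]
      congr 1
      linear_combination hmul
    rw [hpt] at hcomb
    refine le_trans hcomb.2 ?_
    have hτlow : 2/3 ≤ τ k := by
      rw [htdef] at hk2
      linarith only [hk2, hη3]
    have key : τ k - t ≤ 9*η*(τ k - 1/2) := by
      have hkt : τ k - t < 3*η/2 := by rw [htdef]; linarith only [hk1]
      have hprod : 0 ≤ 9*η*(τ k - 1/2 - 1/6) :=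
        mul_nonneg (by linarith only [hηpos]) (by linarith only [hτlow])
      nlinarith [hkt, hprod, hηpos.le]
    have hθlow : 1 - θ ≤ 9*η := by
      have e : (1-θ)*(τ k - 1/2) = τ k - t := by linear_combination -hmul
      have h6 : (1-θ)*(τ k - 1/2) ≤ 9*η*(τ k - 1/2) := e.le.trans key
      exact le_of_mul_le_mul_right h6 hden
    have hreal : θ * r + (1-θ) * D ≤ r + (μ - r)/2 := by
      have e2 : θ * r + (1-θ) * D = r + (1-θ)*(D - r) := by ring
      rw [e2]
      have hDr : 0 ≤ D - r := by rw [hD]; linarith only [hrB]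
      have h9 : (1-θ)*(D-r) ≤ 9*η*(D-r) := mul_le_mul_of_nonneg_right hθlow hDr
      have hημ : η * (24*(B+2-r)) ≤ μ - r :=
        (le_div_iff₀ (by linarith only [hrB])).mp hη24
      have h10 : 9*η*(D-r) ≤ (μ-r)/2 := by
        rw [hD]
        have e3 : 9*η*(B+1-r) = (3/8)*(η*(24*(B+2-r))) - 9*η := by ring
        rw [e3]
        have h11 : (3/8)*(η*(24*(B+2-r))) ≤ (3/8)*(μ-r) := by linarith only [hημ]
        linarith only [h11, hηpos, hμ1]
      exact add_le_add_right (h9.trans h10) r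
    exact EReal.coe_le_coe_iff.mpr hreal
  have hfle : f (L t) ≤ ((r + (μ - r)/2 : ℝ) : EReal) :=
    le_of_tendsto (hsub (L t) hLtI) hfinal
  have : (μ : EReal) ≤ ((r + (μ - r)/2 : ℝ) : EReal) := le_trans hftge hfle
  have hcontra : μ ≤ r + (μ - r)/2 := by exact_mod_cast this
  linarith

lemma convexOn_max_affine (s : Set ℝ) (hs : Convex ℝ s) (p₁ q₁ p₂ q₂ : ℝ) :
    ConvexOn ℝ s (fun x => max (p₁*x+q₁) (p₂*x+q₂)) := by
  refine ⟨hs, fun x _ y _ u v hu hv huv => ?_⟩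
  simp only [smul_eq_mul]
  refine max_le ?_ ?_
  · have h1 : p₁*(u*x+v*y)+q₁ = u*(p₁*x+q₁) + v*(p₁*y+q₁) := by
      linear_combination (-q₁) * huv
    rw [h1]
    exact add_le_add (mul_le_mul_of_nonneg_left (le_max_left _ _) hu)
      (mul_le_mul_of_nonneg_left (le_max_left _ _) hv)
  · have h2 : p₂*(u*x+v*y)+q₂ = u*(p₂*x+q₂) + v*(p₂*y+q₂) := by
      linear_combination (-q₂) * huv
    rw [h2]
    exact add_le_add (mul_le_mul_of_nonneg_left (le_max_right _ _) hu)
      (mul_le_mul_of_nonneg_left (le_max_right _ _) hv)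

lemma coe_epi_convex {a b : ℝ} {h : ℝ → ℝ} (hh : ConvexOn ℝ (Set.Icc a b) h) :
    Convex ℝ {p : ℝ × ℝ | p.1 ∈ Set.Icc a b ∧ ((h p.1 : ℝ) : EReal) ≤ (p.2 : EReal)} := by
  have := hh.convex_epigraph
  convert this using 1
  ext p
  simp [EReal.coe_le_coe_iff]

lemma tendsto_coe_atTop_nhds_top {g : ℕ → ℝ} (hg : Tendsto g atTop atTop) :
    Tendsto (fun n => ((g n : ℝ) : EReal)) atTop (nhds ⊤) := by
  rw [EReal.tendsto_nhds_top_iff_real]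
  intro M
  filter_upwards [hg.eventually_gt_atTop M] with n hn
  exact_mod_cast hn

lemma forward_dir (a b : ℝ) (hab : a < b) (f : ℝ → EReal)
    (hstab : ∀ F : ℕ → ℝ → EReal,
        (∀ n, Convex ℝ {p : ℝ × ℝ | p.1 ∈ Set.Icc a b ∧ F n p.1 ≤ (p.2 : EReal)}) →
        (∀ x ∈ Set.Icc a b, Filter.Tendsto (fun n => F n x) Filter.atTop (nhds (f x))) →
        Filter.Tendsto (fun n => ⨅ x ∈ Set.Icc a b, F n x) Filter.atTop
          (nhds (⨅ x ∈ Set.Icc a b, f x))) :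
    ({x ∈ Set.Icc a b | f x ≠ ⊤}.Nontrivial ∨ (⨅ x ∈ Set.Icc a b, f x) = ⊥) := by
  by_contra hcon
  obtain ⟨hnt, hbot⟩ := not_or.mp hcon
  have hcast : Tendsto (fun n : ℕ => ((n:ℝ)+2)) atTop atTop :=
    tendsto_atTop_add_const_right _ 2 tendsto_natCast_atTop_atTop
  have hcastpos : ∀ n : ℕ, (0:ℝ) < (n:ℝ)+2 := fun n => by positivity
  have haI : a ∈ Set.Icc a b := ⟨le_refl a, hab.le⟩
  have hbI : b ∈ Set.Icc a b := ⟨hab.le, le_refl b⟩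
  rcases (Set.not_nontrivial_iff.mp hnt).eq_empty_or_singleton with hS | ⟨x0, hS⟩
  · -- dom f empty : f ≡ ⊤ on I
    have hStop : ∀ x ∈ Set.Icc a b, f x = ⊤ := by
      intro x hx
      by_contra hfx
      exact absurd (by rw [← hS]; exact ⟨hx, hfx⟩ : x ∈ (∅ : Set ℝ)) (Set.notMem_empty x)
    have hm : (⨅ x ∈ Set.Icc a b, f x) = ⊤ :=
      le_antisymm le_top (le_iInf₂ fun x hx => (hStop x hx).ge)
    set v : ℕ → ℝ := fun n => a + (b-a)/((n:ℝ)+2) with hv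
    set h : ℕ → ℝ → ℝ := fun n x =>
      max (((n:ℝ)+2)^2*x + (-(((n:ℝ)+2)^2 * v n))) ((-((n:ℝ)+2)^2)*x + ((n:ℝ)+2)^2 * v n)
      with hh
    have hvI : ∀ n, v n ∈ Set.Icc a b := by
      intro n
      constructor
      · rw [hv]; simp only []
        have : (0:ℝ) ≤ (b-a)/((n:ℝ)+2) := div_nonneg (by linarith) (hcastpos n).le
        linarith
      · rw [hv]; simp only []
        have : (b-a)/((n:ℝ)+2) ≤ b-a := div_le_self (by linarith) (by linarith [hcastpos n, Nat.cast_nonneg (α := ℝ) n])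
        linarith
    have hval : ∀ n, h n (v n) = 0 := by
      intro n
      rw [hh]; simp only []
      rw [show ((n:ℝ)+2)^2*(v n) + (-(((n:ℝ)+2)^2 * v n)) = 0 by ring,
        show (-((n:ℝ)+2)^2)*(v n) + ((n:ℝ)+2)^2 * v n = 0 by ring, max_self]
    set F : ℕ → ℝ → EReal := fun n x => ((h n x : ℝ) : EReal) with hF
    have hFconv : ∀ n, Convex ℝ {p : ℝ × ℝ | p.1 ∈ Set.Icc a b ∧ F n p.1 ≤ (p.2 : EReal)} := by
      intro n
      exact coe_epi_convex (convexOn_max_affine _ (convex_Icc a b) _ _ _ _)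
    have hFptw : ∀ x ∈ Set.Icc a b, Tendsto (fun n => F n x) atTop (nhds (f x)) := by
      intro x hx
      rw [hStop x hx]
      apply tendsto_coe_atTop_nhds_top
      by_cases hxa : x = a
      · have heq : ∀ n : ℕ, ((n:ℝ)+2)*(b-a) ≤ h n x := by
          intro n
          refine le_trans (le_of_eq ?_) (le_max_right _ _)
          rw [hxa, hv]; simp only []
          have h1 : ((n:ℝ)+2) ≠ 0 := (hcastpos n).ne'
          field_simp
          ring
        exact tendsto_atTop_mono heq (hcast.atTop_mul_const (by linarith))
      · have hxgt : a < x := lt_of_le_of_ne hx.1 (Ne.symm hxa)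
        have t2 : Tendsto (fun n : ℕ => ((n:ℝ)+2)*(x-a) - (b-a)) atTop atTop := by
          simp only [sub_eq_add_neg]
          exact tendsto_atTop_add_const_right _ _ (hcast.atTop_mul_const (by linarith))
        have t3 := hcast.atTop_mul_atTop₀ t2
        refine tendsto_atTop_mono ?_ t3
        intro n
        refine le_trans (le_of_eq ?_) (le_max_left _ _)
        rw [hv]; simp only []
        field_simp
        ring
    have htend := hstab F hFconv hFptw
    rw [hm] at htend
    obtain ⟨n0, hn0⟩ := (htend.eventually_const_lt (EReal.coe_lt_top 0)).exists
    have : (⨅ x ∈ Set.Icc a b, F n0 x) ≤ ((0:ℝ) : EReal) := by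
      refine le_trans (iInf₂_le (v n0) (hvI n0)) ?_
      rw [hF]; simp only []
      rw [hval n0]
    exact absurd (lt_of_lt_of_le hn0 this) (lt_irrefl _)
  · -- dom f = {x0}
    have hx0S : x0 ∈ {x ∈ Set.Icc a b | f x ≠ ⊤} := hS ▸ rfl
    obtain ⟨hx0I, hx0T⟩ := hx0S
    have hStop : ∀ x ∈ Set.Icc a b, x ≠ x0 → f x = ⊤ := by
      intro x hx hxx
      by_contra hfx
      have : x ∈ {x ∈ Set.Icc a b | f x ≠ ⊤} := ⟨hx, hfx⟩
      rw [hS] at this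
      exact hxx this
    have hm : (⨅ x ∈ Set.Icc a b, f x) = f x0 := by
      refine le_antisymm (iInf₂_le x0 hx0I) (le_iInf₂ ?_)
      intro x hx
      by_cases hxx : x = x0
      · subst hxx; exact le_refl _
      · rw [hStop x hx hxx]; exact le_top
    have hx0B : f x0 ≠ ⊥ := fun hb => hbot (hm.trans hb)
    set c : ℝ := (f x0).toReal with hc
    have hfx0 : f x0 = (c : EReal) := (EReal.coe_toReal hx0T hx0B).symm
    set e : ℝ := if x0 = b then a else b with he
    have heI : e ∈ Set.Icc a b := by rw [he]; split <;> assumption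
    have hex0 : e - x0 ≠ 0 := by
      rw [he]; split
      · rename_i hxb; rw [hxb]; intro hc2; apply absurd (by linarith : a = b) hab.ne
      · rename_i hxb; intro hc2; exact hxb (by linarith)
    set κ : ℕ → ℝ := fun n => ((n:ℝ)+2)/(e-x0) with hκ
    set h : ℕ → ℝ → ℝ := fun n x =>
      max ((-(κ n))*x + (κ n * x0 + c))
        ((((n:ℝ)+2)*(κ n))*x + (c - 1 - ((n:ℝ)+2)*(κ n)*x0 - ((n:ℝ)+2))) with hh
    have hnn : ∀ n : ℕ, (0:ℝ) ≤ (n:ℝ) := fun n => Nat.cast_nonneg n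
    -- value at x0
    have hvx0 : ∀ n, h n x0 = c := by
      intro n
      rw [hh]; simp only []
      rw [show (-(κ n))*x0 + (κ n * x0 + c) = c by ring,
        show (((n:ℝ)+2)*(κ n))*x0 + (c - 1 - ((n:ℝ)+2)*(κ n)*x0 - ((n:ℝ)+2))
          = c - 1 - ((n:ℝ)+2) by ring]
      exact max_eq_left (by linarith [hnn n])
    -- lower bound
    have hlow : ∀ n x, c - 1 ≤ h n x := by
      intro n x
      rw [hh]; simp only []
      by_cases hs : κ n * (x - x0) ≤ 1
      · refine le_trans ?_ (le_max_left _ _)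
        have : (-(κ n))*x + (κ n * x0 + c) = c - κ n * (x-x0) := by ring
        rw [this]; linarith
      · refine le_trans ?_ (le_max_right _ _)
        have : (((n:ℝ)+2)*(κ n))*x + (c - 1 - ((n:ℝ)+2)*(κ n)*x0 - ((n:ℝ)+2))
            = c - 1 + ((n:ℝ)+2)*(κ n * (x-x0) - 1) := by ring
        rw [this]
        have h2 : 0 ≤ ((n:ℝ)+2)*(κ n * (x-x0) - 1) :=
          mul_nonneg (hcastpos n).le (by linarith)
        linarith
    -- the dip point
    set w : ℕ → ℝ := fun n => x0 + (e-x0)/((n:ℝ)+2) with hw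
    have hws : ∀ n, κ n * (w n - x0) = 1 := by
      intro n
      rw [hw, hκ]; simp only []
      have h1 : ((n:ℝ)+2) ≠ 0 := (hcastpos n).ne'
      field_simp
      ring
    have hwI : ∀ n, w n ∈ Set.Icc a b := by
      intro n
      have h1n : 1/((n:ℝ)+2) ≤ 1 := by
        rw [div_le_one (hcastpos n)]; linarith [hnn n]
      have hmem := (convex_Icc a b) hx0I heI
        (by linarith : (0:ℝ) ≤ 1 - 1/((n:ℝ)+2))
        (by positivity : (0:ℝ) ≤ 1/((n:ℝ)+2)) (by ring)
      have hweq : w n = (1 - 1/((n:ℝ)+2)) • x0 + (1/((n:ℝ)+2)) • e := by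
        rw [hw]; simp only [smul_eq_mul]
        field_simp
        ring
      rwa [← hweq] at hmem
    have hwval : ∀ n, h n (w n) = c - 1 := by
      intro n
      rw [hh]; simp only []
      rw [show (-(κ n))*(w n) + (κ n * x0 + c) = c - κ n * (w n - x0) by ring,
        show (((n:ℝ)+2)*(κ n))*(w n) + (c - 1 - ((n:ℝ)+2)*(κ n)*x0 - ((n:ℝ)+2))
          = c - 1 + ((n:ℝ)+2)*(κ n * (w n - x0) - 1) by ring, hws n]
      norm_num
    set F : ℕ → ℝ → EReal := fun n x => ((h n x : ℝ) : EReal) with hF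
    have hFconv : ∀ n, Convex ℝ {p : ℝ × ℝ | p.1 ∈ Set.Icc a b ∧ F n p.1 ≤ (p.2 : EReal)} :=
      fun n => coe_epi_convex (convexOn_max_affine _ (convex_Icc a b) _ _ _ _)
    have hFptw : ∀ x ∈ Set.Icc a b, Tendsto (fun n => F n x) atTop (nhds (f x)) := by
      intro x hx
      by_cases hxx : x = x0
      · subst hxx
        rw [hfx0]
        have : (fun n => F n x) = fun _ => ((c:ℝ) : EReal) := by
          funext n; rw [hF]; simp only []; rw [hvx0 n]
        rw [this]
        exact tendsto_const_nhds
      · rw [hStop x hx hxx]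
        apply tendsto_coe_atTop_nhds_top
        set ρ : ℝ := (x - x0)/(e - x0) with hρ
        have hρne : ρ ≠ 0 := by
          rw [hρ]
          exact div_ne_zero (sub_ne_zero.mpr hxx) hex0
        have hκρ : ∀ n, κ n * (x - x0) = ((n:ℝ)+2) * ρ := by
          intro n; rw [hκ, hρ]; simp only []; ring
        rcases lt_or_gt_of_ne hρne with hneg | hpos
        · have heq : ∀ n : ℕ, ((n:ℝ)+2)*(-ρ) + c ≤ h n x := by
            intro n
            refine le_trans (le_of_eq ?_) (le_max_left _ _)
            have : (-(κ n))*x + (κ n * x0 + c) = c - κ n * (x - x0) := by ring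
            rw [this, hκρ n]; ring
          exact tendsto_atTop_mono heq
            (tendsto_atTop_add_const_right _ _ (hcast.atTop_mul_const (by linarith)))
        · have t2 : Tendsto (fun n : ℕ => ((n:ℝ)+2)*ρ - 1) atTop atTop := by
            simp only [sub_eq_add_neg]
            exact tendsto_atTop_add_const_right _ _ (hcast.atTop_mul_const hpos)
          have t3 := hcast.atTop_mul_atTop₀ t2
          have heq : ∀ n : ℕ, ((n:ℝ)+2)*(((n:ℝ)+2)*ρ - 1) + (c-1) ≤ h n x := by
            intro n
            refine le_trans (le_of_eq ?_) (le_max_right _ _)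
            have : (((n:ℝ)+2)*(κ n))*x + (c - 1 - ((n:ℝ)+2)*(κ n)*x0 - ((n:ℝ)+2))
                = c - 1 + ((n:ℝ)+2)*(κ n * (x-x0) - 1) := by ring
            rw [this, hκρ n]; ring
          exact tendsto_atTop_mono heq (tendsto_atTop_add_const_right _ _ t3)
    have hinf : ∀ n, (⨅ x ∈ Set.Icc a b, F n x) = (((c - 1 : ℝ)) : EReal) := by
      intro n
      refine le_antisymm ?_ (le_iInf₂ ?_)
      · refine le_trans (iInf₂_le (w n) (hwI n)) ?_
        rw [hF]; simp only []
        rw [hwval n]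
      · intro x hx
        rw [hF]; simp only []
        exact EReal.coe_le_coe_iff.mpr (hlow n x)
    have htend := hstab F hFconv hFptw
    rw [hm, hfx0] at htend
    have hconst : (fun n => ⨅ x ∈ Set.Icc a b, F n x) = fun _ => (((c-1:ℝ)) : EReal) :=
      funext hinf
    rw [hconst] at htend
    have := tendsto_nhds_unique htend tendsto_const_nhds
    have := EReal.coe_eq_coe_iff.mp this
    linarith

/-- For `C = [a,b]` with `a < b` and convex `f : C → [−∞,∞]`, `f` is
infimum-stable iff its effective domain has more than one point or
`inf_C f = −∞`. -/
theorem stmt_9 (a b : ℝ) (hab : a < b) (f : ℝ → EReal)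
    (hf : Convex ℝ {p : ℝ × ℝ | p.1 ∈ Set.Icc a b ∧ f p.1 ≤ (p.2 : EReal)}) :
    (∀ F : ℕ → ℝ → EReal,
        (∀ n, Convex ℝ {p : ℝ × ℝ | p.1 ∈ Set.Icc a b ∧ F n p.1 ≤ (p.2 : EReal)}) →
        (∀ x ∈ Set.Icc a b, Filter.Tendsto (fun n => F n x) Filter.atTop (nhds (f x))) →
        Filter.Tendsto (fun n => ⨅ x ∈ Set.Icc a b, F n x) Filter.atTop
          (nhds (⨅ x ∈ Set.Icc a b, f x)))
      ↔
    ({x ∈ Set.Icc a b | f x ≠ ⊤}.Nontrivial ∨ (⨅ x ∈ Set.Icc a b, f x) = ⊥) := by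
  constructor
  · intro hstab
    exact forward_dir a b hab f hstab
  · intro hcase F hFconv hFptw
    have hupper : Filter.limsup (fun n => ⨅ x ∈ Set.Icc a b, F n x) Filter.atTop
        ≤ ⨅ x ∈ Set.Icc a b, f x := by
      refine le_iInf₂ ?_
      intro x hx
      calc Filter.limsup (fun n => ⨅ x ∈ Set.Icc a b, F n x) Filter.atTop
          ≤ Filter.limsup (fun n => F n x) Filter.atTop :=
            Filter.limsup_le_limsup (Filter.Eventually.of_forall fun n => iInf₂_le x hx)
        _ = f x := (hFptw x hx).limsup_eq
    have hlower : (⨅ x ∈ Set.Icc a b, f x)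
        ≤ Filter.liminf (fun n => ⨅ x ∈ Set.Icc a b, F n x) Filter.atTop := by
      by_cases hbot : (⨅ x ∈ Set.Icc a b, f x) = ⊥
      · rw [hbot]; exact bot_le
      · rcases hcase with hnt | hbot'
        · exact lower_bound_main a b hab f F hFconv hFptw hnt hbot
        · exact absurd hbot' hbot
    exact tendsto_of_le_liminf_of_limsup_le hlower hupper
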